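/- For every s ∈ [0,1/2] there exists a positive semidefinite matrix Y on ℂ³⊗ℂ³ such that the 18×18 block matrix [[Y, −T_b(J^s)], [−T_b(J^s), Y]] is positive semidefinite and the largest eigenvalue of the partial trace Tr_b(Y) equals 1 + √(1−s). (This exhibits a feasible point of the semidefinite program for the diamond norm of the transposition map composed with N_s, establishing ‖T∘N_s‖_⋄ ≤ 1 + √(1−s) and hence the quantum-capacity bound Q(N_s) ≤ log₂(1 + √(1−s)).) -/

import Mathlib

open Matrix Kronecker ComplexOrder

/-- Partial transpose on the second tensor factor. -/
noncomputable def ptransposeB {m n : ℕ}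
    (M : Matrix (Fin m × Fin n) (Fin m × Fin n) ℂ) :
    Matrix (Fin m × Fin n) (Fin m × Fin n) ℂ :=
  Matrix.of fun p q => M (p.1, q.2) (q.1, p.2)

/-- Partial trace over the second tensor factor. -/
noncomputable def ptraceB {m n : ℕ}
    (M : Matrix (Fin m × Fin n) (Fin m × Fin n) ℂ) :
    Matrix (Fin m) (Fin m) ℂ :=
  Matrix.of fun i k => ∑ j, M (i, j) (k, j)

/-- The largest eigenvalue of a Hermitian matrix (0 if not Hermitian). -/
noncomputable def maxEig {n : ℕ} (M : Matrix (Fin n) (Fin n) ℂ) : ℝ :=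
  if h : M.IsHermitian then ⨆ i, h.eigenvalues i else 0

/-- |ψ₁⟩ = √s |0⟩⊗|0⟩ + |1⟩⊗|2⟩. -/
noncomputable def psi1 (s : ℝ) : Fin 3 × Fin 3 → ℂ := fun p =>
  if p = (0, 0) then (Real.sqrt s : ℂ) else if p = (1, 2) then 1 else 0

/-- |ψ₂⟩ = √(1−s) |0⟩⊗|1⟩ + |2⟩⊗|2⟩. -/
noncomputable def psi2 (s : ℝ) : Fin 3 × Fin 3 → ℂ := fun p =>
  if p = (0, 1) then (Real.sqrt (1 - s) : ℂ) else if p = (2, 2) then 1 else 0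

/-- The unnormalized Choi operator J^s = |ψ₁⟩⟨ψ₁| + |ψ₂⟩⟨ψ₂| of the channel N_s. -/
noncomputable def choiNs (s : ℝ) : Matrix (Fin 3 × Fin 3) (Fin 3 × Fin 3) ℂ :=
  Matrix.vecMulVec (psi1 s) (star (psi1 s)) + Matrix.vecMulVec (psi2 s) (star (psi2 s))

/-! ### Auxiliary definitions for the feasible point -/

/-- Standard basis vector `|i⟩⊗|j⟩` of `ℂ³ ⊗ ℂ³`. -/
noncomputable def ee (i j : Fin 3) : Fin 3 × Fin 3 → ℂ := fun p => if p = (i, j) then 1 else 0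

/-- Rank-one positive semidefinite matrix `|v⟩⟨v|`. -/
noncomputable def r1 {n : Type*} [Fintype n] (v : n → ℂ) : Matrix n n ℂ :=
  Matrix.vecMulVec v (star v)

lemma r1_psd {n : Type*} [Fintype n] (v : n → ℂ) : (r1 v).PosSemidef := by
  rw [r1, vecMulVec_eq (Fin 1), ← conjTranspose_replicateCol]
  exact posSemidef_self_mul_conjTranspose _

noncomputable def vp1 (u : ℝ) : Fin 3 × Fin 3 → ℂ := (u : ℂ) • ee 1 2
noncomputable def vp2 (a b t : ℝ) : Fin 3 × Fin 3 → ℂ :=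
  (t : ℂ) • ((b : ℂ) • ee 0 2 - (a : ℂ) • ee 1 0 - (b : ℂ) • ee 2 1)
noncomputable def vq1 (a : ℝ) : Fin 3 × Fin 3 → ℂ := (a : ℂ) • ee 0 0
noncomputable def vq2 (b : ℝ) : Fin 3 × Fin 3 → ℂ := (b : ℂ) • ee 0 1
noncomputable def vq3 (w : ℝ) : Fin 3 × Fin 3 → ℂ := (w : ℂ) • ee 1 2
noncomputable def vq4 : Fin 3 × Fin 3 → ℂ := ee 2 2
noncomputable def vq5 (a b t : ℝ) : Fin 3 × Fin 3 → ℂ :=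
  (t : ℂ) • ((b : ℂ) • ee 0 2 + (a : ℂ) • ee 1 0 + (b : ℂ) • ee 2 1)

/-- `Pmat = (Y - T_b J)/… `, one half of the decomposition. -/
noncomputable def Pmat (a b t u : ℝ) : Matrix (Fin 3 × Fin 3) (Fin 3 × Fin 3) ℂ :=
  r1 (vp1 u) + r1 (vp2 a b t)

noncomputable def Qmat (a b t w : ℝ) : Matrix (Fin 3 × Fin 3) (Fin 3 × Fin 3) ℂ :=
  r1 (vq1 a) + r1 (vq2 b) + r1 (vq3 w) + r1 vq4 + r1 (vq5 a b t)

set_option maxHeartbeats 4000000 in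
lemma keyA (s a b t u w : ℝ) (hsa : Real.sqrt s = a) (hsb : Real.sqrt (1 - s) = b)
    (hbt : 2 * (b : ℂ) * (t : ℂ) ^ 2 = 1) (hw : (w : ℂ) ^ 2 = 1 + (u : ℂ) ^ 2) :
    Qmat a b t w - Pmat a b t u = ptransposeB (choiNs s) := by
  ext p q
  obtain ⟨i, j⟩ := p
  obtain ⟨k, l⟩ := q
  simp only [Qmat, Pmat, Matrix.sub_apply, Matrix.add_apply]
  fin_cases i <;> fin_cases j <;> fin_cases k <;> fin_cases l <;>
    simp (config := { decide := true }) [r1, vp1, vp2, vq1, vq2, vq3, vq4, vq5, ee, ptransposeB,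
      choiNs, Prod.mk.injEq, psi1, psi2, vecMulVec_apply, hsa, hsb, Complex.conj_ofReal]
  all_goals first
      | linear_combination (a : ℂ) * hbt
      | linear_combination (b : ℂ) * hbt
      | linear_combination hw

set_option maxHeartbeats 1000000 in
lemma keyB (a b t u w : ℝ) (hab : (a:ℂ)^2 + (b:ℂ)^2 = 1) (hbt : 2 * (b:ℂ) * (t:ℂ) ^ 2 = 1)
    (huc : (u:ℂ)^2 = ((b:ℂ)^2 - (a:ℂ)^2) * (t:ℂ)^2) (hwc : (w:ℂ)^2 = 1 + (u:ℂ)^2) :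
    ptraceB (Pmat a b t u + Qmat a b t w) = ((1 + b : ℝ) : ℂ) • 1 := by
  ext i k
  fin_cases i <;> fin_cases k <;>
    simp (config := { decide := true }) [ptraceB, Pmat, Qmat, r1, vp1, vp2, vq1, vq2, vq3, vq4,
      vq5, ee, vecMulVec_apply, Fin.sum_univ_three, Complex.conj_ofReal, Prod.mk.injEq,
      Matrix.one_apply, Matrix.smul_apply, Matrix.add_apply]
  all_goals first
    | linear_combination hab + (b:ℂ) * hbt
    | linear_combination 2 * huc + hwc + (b:ℂ) * hbt
    | linear_combination (b:ℂ) * hbt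
    | ring

lemma blocks_psd {n : Type*} [Fintype n] [DecidableEq n] {P Q : Matrix n n ℂ}
    (hP : P.PosSemidef) (hQ : Q.PosSemidef) :
    (Matrix.fromBlocks (P + Q) (P - Q) (P - Q) (P + Q)).PosSemidef := by
  rw [posSemidef_iff_dotProduct_mulVec]; constructor
  · rw [isHermitian_fromBlocks_iff]
    exact ⟨hP.1.add hQ.1, (hP.1.sub hQ.1).eq, (hP.1.sub hQ.1).eq, hP.1.add hQ.1⟩
  · intro x
    have hx : x = Sum.elim (x ∘ Sum.inl) (x ∘ Sum.inr) := by
      funext i; cases i <;> rfl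
    rw [hx]
    set x1 := x ∘ Sum.inl
    set x2 := x ∘ Sum.inr
    have key : star (Sum.elim x1 x2) ⬝ᵥ
        (Matrix.fromBlocks (P + Q) (P - Q) (P - Q) (P + Q)) *ᵥ (Sum.elim x1 x2)
        = star (x1 + x2) ⬝ᵥ P *ᵥ (x1 + x2) + star (x1 - x2) ⬝ᵥ Q *ᵥ (x1 - x2) := by
      simp only [Function.star_sumElim, fromBlocks_mulVec, sumElim_dotProduct_sumElim,
        add_mulVec, sub_mulVec, mulVec_add, mulVec_sub, dotProduct_add, add_dotProduct,
        dotProduct_sub, sub_dotProduct, star_add, star_sub, Sum.elim_comp_inl, Sum.elim_comp_inr]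
      ring
    rw [key]
    exact add_nonneg (hP.dotProduct_mulVec_nonneg _) (hQ.dotProduct_mulVec_nonneg _)

lemma maxEig_scalar (c : ℝ) : maxEig ((c : ℂ) • (1 : Matrix (Fin 3) (Fin 3) ℂ)) = c := by
  have h : ((c:ℂ) • (1 : Matrix (Fin 3) (Fin 3) ℂ)).IsHermitian := by
    unfold Matrix.IsHermitian
    rw [conjTranspose_smul, conjTranspose_one]
    simp
  unfold maxEig
  rw [dif_pos h]
  have he : ∀ i, h.eigenvalues i = c := by
    intro i
    have h1 := h.mulVec_eigenvectorBasis i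
    rw [smul_mulVec, one_mulVec] at h1
    have hv : ⇑(h.eigenvectorBasis i) ≠ 0 := by
      have := h.eigenvectorBasis.orthonormal.ne_zero i
      intro hz
      apply this
      ext j
      exact congrFun hz j
    have h2 : ((c : ℂ) - ((h.eigenvalues i : ℝ) : ℂ)) • ⇑(h.eigenvectorBasis i) = 0 := by
      rw [sub_smul, h1, RCLike.real_smul_eq_coe_smul (K := ℂ)]; exact sub_self _
    rcases smul_eq_zero.mp h2 with h3 | h3
    · have := sub_eq_zero.mp h3
      exact_mod_cast this.symm
    · exact absurd h3 hv
  simp_rw [he]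
  exact ciSup_const

/-- Feasible point for the diamond-norm SDP: ‖T∘N_s‖_⋄ ≤ 1 + √(1−s), hence
Q(N_s) ≤ log₂(1 + √(1−s)). -/
theorem stmt1 (s : ℝ) (hs : s ∈ Set.Icc (0 : ℝ) (1/2)) :
    ∃ Y : Matrix (Fin 3 × Fin 3) (Fin 3 × Fin 3) ℂ,
      Y.PosSemidef ∧
      (Matrix.fromBlocks Y (-(ptransposeB (choiNs s)))
        (-(ptransposeB (choiNs s))) Y).PosSemidef ∧
      maxEig (ptraceB Y) = 1 + Real.sqrt (1 - s) := by
  obtain ⟨hs0, hs2⟩ := hs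
  have h1s : (0:ℝ) < 1 - s := by norm_num at hs2 ⊢; linarith
  set a := Real.sqrt s with ha
  set b := Real.sqrt (1 - s) with hb
  have hb0 : 0 < b := Real.sqrt_pos.mpr h1s
  set t := Real.sqrt (1 / (2 * b)) with ht
  set u := Real.sqrt (b ^ 2 - a ^ 2) * t with hu'
  set w := Real.sqrt (1 + u ^ 2) with hw'
  have ha2 : a ^ 2 = s := Real.sq_sqrt hs0
  have hb2 : b ^ 2 = 1 - s := Real.sq_sqrt h1s.le
  have ht2 : t ^ 2 = 1 / (2 * b) := Real.sq_sqrt (by positivity)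
  have hba : a ^ 2 ≤ b ^ 2 := by
    rw [ha2, hb2]
    norm_num at hs2 ⊢
    linarith
  have hu2 : u ^ 2 = (b ^ 2 - a ^ 2) * t ^ 2 := by
    rw [hu', mul_pow, Real.sq_sqrt (by linarith)]
  have hw2 : w ^ 2 = 1 + u ^ 2 := Real.sq_sqrt (by positivity)
  have habr : a ^ 2 + b ^ 2 = 1 := by rw [ha2, hb2]; ring
  have hab : (a:ℂ)^2 + (b:ℂ)^2 = 1 := by exact_mod_cast habr
  have hbtr : 2 * b * t ^ 2 = 1 := by
    rw [ht2]
    field_simp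
  have hbt : 2 * (b:ℂ) * (t:ℂ)^2 = 1 := by exact_mod_cast hbtr
  have huc : (u:ℂ)^2 = ((b:ℂ)^2 - (a:ℂ)^2) * (t:ℂ)^2 := by exact_mod_cast hu2
  have hwc : (w:ℂ)^2 = 1 + (u:ℂ)^2 := by exact_mod_cast hw2
  have hP : (Pmat a b t u).PosSemidef := (r1_psd _).add (r1_psd _)
  have hQ : (Qmat a b t w).PosSemidef :=
    ((((r1_psd _).add (r1_psd _)).add (r1_psd _)).add (r1_psd _)).add (r1_psd _)
  have hK := keyA s a b t u w ha.symm hb.symm hbt hwc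
  refine ⟨Pmat a b t u + Qmat a b t w, hP.add hQ, ?_, ?_⟩
  · have hneg : -(ptransposeB (choiNs s)) = Pmat a b t u - Qmat a b t w := by
      rw [← hK, neg_sub]
    rw [hneg]
    exact blocks_psd hP hQ
  · rw [keyB a b t u w hab hbt huc hwc, maxEig_scalar (1 + b)]
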